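/- arXiv:1512.01744 — 5 statements merged into one kernel-verified Lean document; each statement's English description precedes it below -/
import Mathlib

section
/- Let G be a group that is Jordan with index J and such that every finite abelian subgroup of G can be generated by at most m elements. Let H be a subgroup of G and N a positive integer such that every element of finite order in H has order at most N. Then every finite subgroup B of H satisfies |B| ≤ J · N^m. In particular, H is bounded. -/
/-- A group `G` is Jordan with index `J` if every finite subgroup `B` of `G` contains an
abelian subgroup `A` that is normal in `B` and of index `[B:A] ≤ J`. -/
def IsJordanWithIndex (G : Type*) [Group G] (J : ℕ) : Prop :=
  ∀ B : Subgroup G, Finite B →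
    ∃ A : Subgroup G, A ≤ B ∧ (∀ a ∈ A, ∀ b ∈ A, a * b = b * a) ∧
      (A.subgroupOf B).Normal ∧ A.relIndex B ≤ J

/-- Every finite abelian subgroup of `G` can be generated by at most `m` elements. -/
def HasAbelianRankBound (G : Type*) [Group G] (m : ℕ) : Prop :=
  ∀ A : Subgroup G, Finite A → (∀ a ∈ A, ∀ b ∈ A, a * b = b * a) →
    ∃ S : Finset G, S.card ≤ m ∧ Subgroup.closure (S : Set G) = A

open Subgroup Pointwise
lemma card_closure_le_prod {G : Type*} [CommGroup G] (T : Finset G) :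
    Nat.card (closure (T : Set G)) ≤ ∏ x ∈ T, orderOf x := by
  classical
  induction T using Finset.induction_on with
  | empty => simp
  | @insert x T hx ih =>
    rw [Finset.coe_insert, Set.insert_eq, Subgroup.closure_union, Finset.prod_insert hx]
    calc Nat.card ((closure {x} ⊔ closure (T : Set G) : Subgroup G))
        ≤ Nat.card (closure {x} : Subgroup G) * Nat.card (closure (T : Set G)) := by
          have h1 := Subgroup.mul_normal (closure {x}) (closure (T : Set G))
          have h2 : Nat.card ((closure {x} ⊔ closure (T : Set G) : Subgroup G)) =
              Nat.card (((closure {x} : Set G) * (closure (T : Set G) : Set G) : Set G)) := by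
            rw [← h1]; rfl
          rw [h2]
          exact Set.natCard_mul_le
      _ ≤ orderOf x * ∏ y ∈ T, orderOf y := by
          apply Nat.mul_le_mul _ ih
          rw [← Subgroup.zpowers_eq_closure, Nat.card_zpowers]

/-- Let `G` be a group that is Jordan with index `J` and such that every
finite abelian subgroup of `G` can be generated by at most `m` elements. Let `H` be a
subgroup of `G` and `N` a positive integer such that every element of finite order in `H`
has order at most `N`. Then every finite subgroup `B` of `H` satisfies `|B| ≤ J * N ^ m`;
in particular, `H` is bounded. -/
theorem stmt0 {G : Type*} [Group G] {J m N : ℕ} (hJ : 0 < J) (hm : 0 < m) (hN : 0 < N)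
    (hJordan : IsJordanWithIndex G J) (hrank : HasAbelianRankBound G m)
    (H : Subgroup G) (hH : ∀ h ∈ H, IsOfFinOrder h → orderOf h ≤ N) :
    ∀ B : Subgroup G, B ≤ H → Finite B → Nat.card B ≤ J * N ^ m := by
  classical
  intro B hBH hBfin
  obtain ⟨A, hAB, hAcomm, hnorm, hrel⟩ := hJordan B hBfin
  haveI hAfin : Finite A :=
    Finite.of_injective (Subgroup.inclusion hAB) (Subgroup.inclusion_injective hAB)
  obtain ⟨S, hScard, hSclosure⟩ := hrank A hAfin hAcomm
  letI : CommGroup A :=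
    { (inferInstance : Group A) with
      mul_comm := fun a b => Subtype.ext (hAcomm a.1 a.2 b.1 b.2) }
  have hSA : ∀ s ∈ S, s ∈ A := fun s hs => hSclosure ▸ Subgroup.subset_closure hs
  set T : Finset A := S.attach.image (fun s => (⟨s.1, hSA s.1 s.2⟩ : A)) with hT
  have hTimage : Subtype.val '' (T : Set A) = (S : Set G) := by
    ext g
    simp only [hT, Finset.coe_image, Set.image_image]
    constructor
    · rintro ⟨a, -, rfl⟩; exact a.2
    · intro hg; exact ⟨⟨g, hg⟩, by simp, rfl⟩
  have hTclosure : closure (T : Set A) = ⊤ := by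
    apply Subgroup.map_injective A.subtype_injective
    rw [MonoidHom.map_closure, ← MonoidHom.range_eq_map, Subgroup.range_subtype]
    exact (congrArg Subgroup.closure hTimage).trans hSclosure
  -- bound Nat.card A
  have hcardA : Nat.card A ≤ N ^ m := by
    have h1 : Nat.card A = Nat.card (closure (T : Set A)) := by
      rw [hTclosure]; exact (Nat.card_congr Subgroup.topEquiv.toEquiv).symm
    have h2 := card_closure_le_prod T
    have h3 : ∏ x ∈ T, orderOf x ≤ N ^ T.card := by
      apply Finset.prod_le_pow_card
      intro x hxT
      have hxG : orderOf (x : G) ≤ N := by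
        apply hH _ (hBH (hAB x.2))
        rw [← orderOf_pos_iff, Subgroup.orderOf_coe]
        exact orderOf_pos x
      calc orderOf x = orderOf (x : G) := (Subgroup.orderOf_coe x).symm
        _ ≤ N := hxG
    have h4 : T.card ≤ m := le_trans (Finset.card_image_le.trans (by simp)) hScard
    calc Nat.card A ≤ N ^ T.card := h1 ▸ le_trans h2 h3
      _ ≤ N ^ m := Nat.pow_le_pow_right hN h4
  -- final counting
  have hcardB : Nat.card B = A.relIndex B * Nat.card (A.subgroupOf B) := by
    rw [Subgroup.relIndex, Subgroup.index, Subgroup.card_eq_card_quotient_mul_card_subgroup]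
  have hcardSub : Nat.card (A.subgroupOf B) = Nat.card A :=
    Nat.card_congr (Subgroup.subgroupOfEquivOfLe hAB).toEquiv
  rw [hcardB, hcardSub]
  exact Nat.mul_le_mul hrel hcardA
end

section
/- For all positive integers n and N there exists a positive integer 𝐍 = 𝐍(n,N), depending only on n and N, with the following property: for every field K of characteristic zero and every subgroup H of GL(n,K) such that every element of finite order in H has order at most N, every finite subgroup of H has order at most 𝐍. In particular, H is bounded. -/
open Polynomial Matrix

section Projectors

variable {F : Type*} [Field F] [IsAlgClosed F] [CharZero F] {n L : ℕ}

/-- If `q` vanishes at all `L`-th roots of unity and `u ^ L = 1`, then `aeval u q = 0`. -/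
lemma aux_aeval_zero (hL : 0 < L) (u : Matrix (Fin n) (Fin n) F) (hu : u ^ L = 1)
    {q : F[X]} (hq : ∀ μ ∈ nthRootsFinset L (1 : F), q.eval μ = 0) : aeval u q = 0 := by
  classical
  have hLF : NeZero ((L : F)) := ⟨Nat.cast_ne_zero.mpr hL.ne'⟩
  obtain ⟨ζ, hζ⟩ := HasEnoughRootsOfUnity.exists_primitiveRoot F L
  have hprod : (X ^ L - 1 : F[X]) = ∏ μ ∈ nthRootsFinset L (1 : F), (X - C μ) :=
    X_pow_sub_one_eq_prod hL hζ
  rcases eq_or_ne q 0 with rfl | hq0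
  · simp
  have hdvd : (X ^ L - 1 : F[X]) ∣ q := by
    rw [hprod]
    have hle : (nthRootsFinset L (1 : F)).val ≤ q.roots := by
      rw [Multiset.le_iff_count]
      intro a
      by_cases ha : a ∈ nthRootsFinset L (1 : F)
      · rw [Multiset.count_eq_one_of_mem (nthRootsFinset L (1 : F)).nodup ha, count_roots]
        exact (rootMultiplicity_pos hq0).mpr (hq a ha)
      · rw [Multiset.count_eq_zero_of_notMem ha]
        exact Nat.zero_le _
    calc (∏ μ ∈ nthRootsFinset L (1 : F), (X - C μ))
        = ((nthRootsFinset L (1 : F)).val.map fun a => X - C a).prod := rfl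
      _ ∣ (q.roots.map fun a => X - C a).prod :=
          Multiset.prod_dvd_prod_of_le (Multiset.map_le_map hle)
      _ ∣ q := prod_multiset_X_sub_C_dvd q
  obtain ⟨c, hc⟩ := hdvd
  rw [hc, _root_.map_mul]
  have : (aeval u) (X ^ L - 1 : F[X]) = 0 := by
    simp [hu]
  rw [this, zero_mul]

/-- trace of `aeval u q` when all traces of powers are `n`. -/
lemma trace_aeval (u : Matrix (Fin n) (Fin n) F) (htr : ∀ k : ℕ, (u ^ k).trace = (n : F))
    (q : F[X]) : (aeval u q).trace = (n : F) * q.eval 1 := by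
  rw [aeval_eq_sum_range (p := q) u, eval_eq_sum_range (p := q) 1]
  rw [Matrix.trace_sum, Finset.mul_sum]
  refine Finset.sum_congr rfl fun i _ => ?_
  rw [Matrix.trace_smul, htr i, smul_eq_mul, one_pow, mul_one, mul_comm]

/-- An idempotent matrix with zero trace is zero (char zero). -/
lemma idem_trace_zero {m : Type*} [Fintype m] [DecidableEq m]
    (P : Matrix m m F) (h : P * P = P) (ht : P.trace = 0) : P = 0 := by
  classical
  set f := Matrix.toLin' P with hf
  have hff : f ∘ₗ f = f := by
    rw [hf, ← Matrix.toLin'_mul, h]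
  obtain ⟨p, hp⟩ := (LinearMap.isProj_iff_isIdempotentElem f).mpr hff
  have htr : LinearMap.trace F (m → F) f = (Module.finrank F p : F) := hp.trace
  have htr2 : LinearMap.trace F (m → F) f = P.trace := by
    rw [LinearMap.trace_eq_matrix_trace F (Pi.basisFun F m) f, hf,
      LinearMap.toMatrix_eq_toMatrix', LinearMap.toMatrix'_toLin']
  rw [htr2, ht] at htr
  have hrk : Module.finrank F p = 0 := by exact_mod_cast htr.symm
  have hp0 : p = ⊥ := Submodule.finrank_eq_zero.mp hrk
  have hf0 : f = 0 := by
    refine LinearMap.ext fun v => ?_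
    have hv := hp.map_mem v
    rw [hp0, Submodule.mem_bot] at hv
    simpa using hv
  have : Matrix.toLin' P = Matrix.toLin' 0 := by rw [← hf, hf0, _root_.map_zero]
  exact Matrix.toLin'.injective this

/-- Key lemma: a matrix of finite order all of whose power traces equal `n` is `1`. -/
lemma eq_one_of_traces (hL : 0 < L) (u : Matrix (Fin n) (Fin n) F) (hu : u ^ L = 1)
    (htr : ∀ k : ℕ, (u ^ k).trace = (n : F)) : u = 1 := by
  classical
  set s := nthRootsFinset L (1 : F) with hs
  have hinj : Set.InjOn (id : F → F) s := fun a _ b _ h => h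
  have h1s : (1 : F) ∈ s := (mem_nthRootsFinset hL 1).mpr (one_pow L)
  set P : F → Matrix (Fin n) (Fin n) F := fun μ => aeval u (Lagrange.basis s id μ) with hP
  -- each P μ is idempotent
  have hidem : ∀ μ ∈ s, P μ * P μ = P μ := by
    intro μ hμ
    have : aeval u (Lagrange.basis s id μ * Lagrange.basis s id μ - Lagrange.basis s id μ) = 0 := by
      refine aux_aeval_zero hL u hu fun ν hν => ?_
      rcases eq_or_ne μ ν with rfl | hne
      · have h1 : (Lagrange.basis s id μ).eval (id μ) = 1 := Lagrange.eval_basis_self hinj hμ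
        simp only [id_eq] at h1
        simp [h1]
      · have h0 : (Lagrange.basis s id μ).eval (id ν) = 0 := Lagrange.eval_basis_of_ne hne hν
        simp only [id_eq] at h0
        simp [h0]
    rw [map_sub, _root_.map_mul, sub_eq_zero] at this
    exact this
  -- u * P μ = μ • P μ
  have hup : ∀ μ ∈ s, u * P μ = μ • P μ := by
    intro μ hμ
    have : aeval u ((X - C μ) * Lagrange.basis s id μ) = 0 := by
      refine aux_aeval_zero hL u hu fun ν hν => ?_
      rcases eq_or_ne μ ν with rfl | hne
      · simp
      · have : (Lagrange.basis s id μ).eval (id ν) = 0 := Lagrange.eval_basis_of_ne hne hν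
        simp only [id_eq] at this
        simp [this]
    rw [_root_.map_mul, map_sub, aeval_X, aeval_C] at this
    rw [sub_mul, sub_eq_zero] at this
    rw [this]
    simp [Algebra.algebraMap_eq_smul_one, smul_mul_assoc]
    rfl
  -- For μ ≠ 1, P μ = 0
  have hzero : ∀ μ ∈ s, μ ≠ 1 → P μ = 0 := by
    intro μ hμ hne
    refine idem_trace_zero (P μ) (hidem μ hμ) ?_
    rw [hP, trace_aeval u htr]
    have : (Lagrange.basis s id μ).eval (id 1) = 0 := Lagrange.eval_basis_of_ne hne h1s
    simp only [id_eq] at this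
    rw [this, mul_zero]
  -- sum of P μ = 1
  have hsum : ∑ μ ∈ s, P μ = 1 := by
    rw [hP]
    have : ∑ μ ∈ s, Lagrange.basis s id μ = 1 := Lagrange.sum_basis hinj ⟨1, h1s⟩
    rw [← map_sum]
    simp only [this, _root_.map_one]
  -- hence P 1 = 1
  have hP1 : P 1 = 1 := by
    rw [← hsum]
    rw [Finset.sum_eq_single_of_mem 1 h1s]
    intro b hb hbne
    exact hzero b hb hbne
  have := hup 1 h1s
  rw [hP1, mul_one, one_smul] at this
  exact this

end Projectors

section TraceMem

variable {F : Type*} [Field F] [IsAlgClosed F] [DecidableEq F] {n L : ℕ}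

/-- The trace of a matrix of finite order lies in the finite set of sums of roots of unity. -/
lemma trace_mem_rootSums (hL : 0 < L) (m : Matrix (Fin n) (Fin n) F) (hm : m ^ L = 1) :
    m.trace ∈ (Fintype.piFinset fun _ : Fin n => nthRootsFinset L (1 : F)).image
      fun f => ∑ i, f i := by
  classical
  have hmonic := m.charpoly_monic
  have hsplits : m.charpoly.Splits := IsAlgClosed.splits m.charpoly
  have hdeg : m.charpoly.natDegree = n := by
    rw [Matrix.charpoly_natDegree_eq_dim, Fintype.card_fin]
  have hcard : m.charpoly.roots.card = n := by
    rw [(Polynomial.splits_iff_card_roots).mp hsplits, hdeg]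
  have hroot : ∀ μ ∈ m.charpoly.roots, μ ^ L = 1 := by
    intro μ hμ
    have hev : m.charpoly.eval μ = 0 := by
      exact (Polynomial.mem_roots (hmonic.ne_zero)).mp hμ
    have hdet : (scalar (Fin n) μ - m).det = 0 := by
      have h1 : m.charpoly.eval μ = (scalar (Fin n) μ - m).det := by
        rw [Matrix.charpoly, _root_.eval_det, matPolyEquiv_charmatrix]
        simp
      rwa [h1] at hev
    obtain ⟨v, hv0, hv⟩ := (Matrix.exists_mulVec_eq_zero_iff).mpr hdet
    have hmv : m.mulVec v = μ • v := by
      have := sub_mulVec (scalar (Fin n) μ) m v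
      rw [hv] at this
      have h2 : (scalar (Fin n) μ).mulVec v = μ • v := by
        ext i
        simp [Matrix.scalar, Matrix.mulVec_diagonal]
      have h3 := eq_of_sub_eq_zero this.symm
      rw [h2] at h3
      exact h3.symm
    have hpow : ∀ k : ℕ, (m ^ k).mulVec v = μ ^ k • v := by
      intro k
      induction k with
      | zero => simp [Matrix.one_mulVec]
      | succ k ih =>
          rw [pow_succ', pow_succ', ← Matrix.mulVec_mulVec, ih, Matrix.mulVec_smul, hmv,
            smul_smul, mul_comm]
    have := hpow L
    rw [hm, Matrix.one_mulVec] at this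
    obtain ⟨i, hi⟩ := Function.ne_iff.mp hv0
    have := congrFun this.symm i
    simp only [Pi.smul_apply, smul_eq_mul] at this
    have h4 : (μ ^ L - 1) * v i = 0 := by rw [sub_mul, one_mul, this, sub_self]
    rcases mul_eq_zero.mp h4 with h | h
    · exact sub_eq_zero.mp h
    · exact absurd h hi
  -- write roots as a function Fin n → F
  set l := m.charpoly.roots.toList with hl
  have hlen : l.length = n := by rw [hl, Multiset.length_toList, hcard]
  set f : Fin n → F := fun i => l.get (Fin.cast hlen.symm i) with hf
  have hsum : m.trace = ∑ i, f i := by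
    rw [Matrix.trace_eq_sum_roots_charpoly]
    have h5 : m.charpoly.roots.sum = l.sum := by rw [hl, Multiset.sum_toList]
    rw [h5]
    conv_lhs => rw [← List.ofFn_get l]
    rw [List.sum_ofFn]
    exact Fintype.sum_equiv (finCongr hlen) _ _ fun i => rfl
  rw [hsum]
  refine Finset.mem_image.mpr ⟨f, ?_, rfl⟩
  refine Fintype.mem_piFinset.mpr fun i => ?_
  refine (mem_nthRootsFinset hL 1).mpr ?_
  refine hroot _ ?_
  have h6 : f i ∈ l := by apply List.get_mem
  rw [hl] at h6
  exact Multiset.mem_toList.mp h6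

end TraceMem

section Main

variable {K : Type*} [Field K] [CharZero K] {n L : ℕ}

private lemma trace_map' {R S : Type*} [CommRing R] [CommRing S] (φ : R →+* S)
    (A : Matrix (Fin n) (Fin n) R) : (A.map φ).trace = φ A.trace := by
  simp [Matrix.trace, map_sum, Matrix.map_apply]

lemma card_le_of_pow_eq_one (hL : 0 < L) (B : Subgroup (GL (Fin n) K)) (hfin : Finite B)
    (hB : ∀ g ∈ B, g ^ L = 1) : Nat.card B ≤ (L ^ n) ^ (n * n) := by
  classical
  set 𝕂 := AlgebraicClosure K with h𝕂
  haveI : CharZero 𝕂 := charZero_of_injective_algebraMap (algebraMap K 𝕂).injective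
  set φ := algebraMap K 𝕂 with hφ
  -- the image of B in the matrix ring
  set img : Set (Matrix (Fin n) (Fin n) K) :=
    (fun g : GL (Fin n) K => (g : Matrix (Fin n) (Fin n) K)) '' B with himg
  obtain ⟨b, hbsub, hbspan, hbli⟩ := exists_linearIndependent K img
  have hbfin : b.Finite := hbli.setFinite
  haveI : Fintype b := hbfin.fintype
  have hbcard : Nat.card b ≤ n * n := by
    have h1 := hbli.fintype_card_le_finrank
    rw [Nat.card_eq_fintype_card]
    calc Fintype.card b ≤ Module.finrank K (Matrix (Fin n) (Fin n) K) := h1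
      _ = n * n := by rw [Module.finrank_matrix]; simp
  -- matrices of elements of B have finite order
  have hmat : ∀ g ∈ B, ((g : GL (Fin n) K) : Matrix (Fin n) (Fin n) K) ^ L = 1 := by
    intro g hg
    have := congrArg Units.val (hB g hg)
    rwa [Units.val_pow_eq_pow_val, Units.val_one] at this
  -- target finset of possible traces
  set T : Finset 𝕂 :=
    (Fintype.piFinset fun _ : Fin n => Polynomial.nthRootsFinset L (1 : 𝕂)).image
      (fun f => ∑ i, f i) with hT
  have hTcard : T.card ≤ L ^ n := by
    calc T.card ≤ (Fintype.piFinset fun _ : Fin n => Polynomial.nthRootsFinset L (1 : 𝕂)).card :=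
          Finset.card_image_le
      _ = ∏ _i : Fin n, (Polynomial.nthRootsFinset L (1 : 𝕂)).card := Fintype.card_piFinset _
      _ ≤ ∏ _i : Fin n, L := by
          refine Finset.prod_le_prod (fun _ _ => Nat.zero_le _) fun i _ => ?_
          calc (Polynomial.nthRootsFinset L (1 : 𝕂)).card
              ≤ (Polynomial.nthRoots L (1 : 𝕂)).card := by
                classical
                rw [Polynomial.nthRootsFinset_def]
                exact Multiset.toFinset_card_le _
            _ ≤ L := Polynomial.card_nthRoots L 1
      _ = L ^ n := by rw [Finset.prod_const, Finset.card_univ, Fintype.card_fin]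
  -- membership of traces
  have hmem : ∀ g ∈ B, φ (((g : GL (Fin n) K) : Matrix (Fin n) (Fin n) K).trace) ∈ T := by
    intro g hg
    have h2 : (((g : GL (Fin n) K) : Matrix (Fin n) (Fin n) K).map φ) ^ L = 1 := by
      rw [← RingHom.mapMatrix_apply, ← map_pow, hmat g hg, _root_.map_one]
    have h3 := trace_mem_rootSums (F := 𝕂) hL _ h2
    rwa [_root_.trace_map'] at h3
  -- the injective map
  have hmemT : ∀ (g : B) (x : b),
      φ ((((g : GL (Fin n) K) : Matrix (Fin n) (Fin n) K) * (x : Matrix (Fin n) (Fin n) K)).trace)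
        ∈ T := by
    intro g x
    obtain ⟨g', hg', hgx⟩ := hbsub x.2
    have hmul : ((g : GL (Fin n) K) * g') ∈ B := B.mul_mem g.2 hg'
    have h7 := hmem _ hmul
    rw [Units.val_mul] at h7
    rw [show ((x : Matrix (Fin n) (Fin n) K)) = (g' : Matrix (Fin n) (Fin n) K) from hgx.symm]
    exact h7
  set Φ : B → (b → T) := fun g x =>
    ⟨φ ((((g : GL (Fin n) K) : Matrix (Fin n) (Fin n) K)
        * (x : Matrix (Fin n) (Fin n) K)).trace), hmemT g x⟩ with hΦ
  have hinj : Function.Injective Φ := by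
    intro g h hgh
    set G : Matrix (Fin n) (Fin n) K := ((g : GL (Fin n) K) : Matrix (Fin n) (Fin n) K) with hG
    set Hm : Matrix (Fin n) (Fin n) K := ((h : GL (Fin n) K) : Matrix (Fin n) (Fin n) K) with hHm
    -- traces vanish on span
    have hker : ∀ x ∈ Submodule.span K img, ((G - Hm) * x).trace = 0 := by
      have hb0 : ∀ x ∈ b, ((G - Hm) * x).trace = 0 := by
        intro x hx
        have := congrFun hgh ⟨x, hx⟩
        have heq : φ ((G * x).trace) = φ ((Hm * x).trace) := congrArg Subtype.val this
        have heq2 : (G * x).trace = (Hm * x).trace := (algebraMap K 𝕂).injective heq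
        rw [sub_mul, Matrix.trace_sub, heq2, sub_self]
      intro x hx
      rw [← hbspan] at hx
      induction hx using Submodule.span_induction with
      | mem y hy => exact hb0 y hy
      | zero => simp
      | add y z _ _ hy hz => rw [mul_add, Matrix.trace_add, hy, hz, add_zero]
      | smul c y _ hy => rw [Matrix.mul_smul, Matrix.trace_smul, hy, smul_zero]
    -- the unit u
    set u : GL (Fin n) K := (h : GL (Fin n) K)⁻¹ * (g : GL (Fin n) K) with hu
    have huB : u ∈ B := B.mul_mem (B.inv_mem h.2) g.2
    set U : Matrix (Fin n) (Fin n) K := (u : Matrix (Fin n) (Fin n) K) with hU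
    set Hinv : Matrix (Fin n) (Fin n) K :=
      (((h : GL (Fin n) K)⁻¹ : GL (Fin n) K) : Matrix (Fin n) (Fin n) K) with hHinv
    have hHH : Hm * Hinv = 1 := by
      rw [hHm, hHinv, ← Units.val_mul, mul_inv_cancel, Units.val_one]
    have hHH' : Hinv * Hm = 1 := by
      rw [hHm, hHinv, ← Units.val_mul, inv_mul_cancel, Units.val_one]
    have hGU : G = Hm * U := by
      rw [hU, hu, Units.val_mul, ← hHinv, ← mul_assoc, hHH, one_mul]
    -- trace relations
    have htr : ∀ k : ℕ, (U ^ (k + 1)).trace = (U ^ k).trace := by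
      intro k
      have hwB : u ^ k * (h : GL (Fin n) K)⁻¹ ∈ B :=
        B.mul_mem (B.pow_mem huB k) (B.inv_mem h.2)
      have hwimg : ((u ^ k * (h : GL (Fin n) K)⁻¹ : GL (Fin n) K) :
          Matrix (Fin n) (Fin n) K) ∈ img := ⟨_, hwB, rfl⟩
      have h4 := hker _ (Submodule.subset_span hwimg)
      rw [Units.val_mul, Units.val_pow_eq_pow_val] at h4
      have h5 : (G - Hm) * ((U : Matrix (Fin n) (Fin n) K) ^ k * Hinv)
          = Hm * (((U - 1) * U ^ k) * Hinv) := by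
        rw [hGU]
        noncomm_ring
      rw [h5] at h4
      rw [Matrix.trace_mul_comm, mul_assoc, hHH', mul_one] at h4
      rw [sub_mul, one_mul, Matrix.trace_sub, sub_eq_zero, ← pow_succ'] at h4
      exact h4
    have htrn : ∀ k : ℕ, (U ^ k).trace = (n : K) := by
      intro k
      induction k with
      | zero => simp [Matrix.trace_one]
      | succ k ih => rw [htr k, ih]
    -- pass to the algebraic closure
    have hUL : U ^ L = 1 := hmat u huB
    have hU'L : (U.map φ) ^ L = 1 := by
      rw [← RingHom.mapMatrix_apply, ← map_pow, hUL, _root_.map_one]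
    have hU'tr : ∀ k : ℕ, ((U.map φ) ^ k).trace = (n : 𝕂) := by
      intro k
      rw [← RingHom.mapMatrix_apply, ← map_pow, RingHom.mapMatrix_apply, _root_.trace_map', htrn k]
      simp
    have hU'1 : U.map φ = 1 := eq_one_of_traces hL (U.map φ) hU'L hU'tr
    have hU1 : U = 1 := by
      have h6 : U.map φ = (1 : Matrix (Fin n) (Fin n) K).map φ := by
        rw [hU'1, Matrix.map_one φ (map_zero φ) (map_one φ)]
      ext i j
      exact (algebraMap K 𝕂).injective (congrFun (congrFun h6 i) j)
    have hu1 : u = 1 := Units.ext hU1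
    have : (h : GL (Fin n) K) = (g : GL (Fin n) K) := by
      rw [hu] at hu1
      have := inv_mul_eq_one.mp hu1
      exact this
    exact Subtype.ext this.symm
  -- counting
  haveI : Finite (b → T) := by infer_instance
  calc Nat.card B ≤ Nat.card (b → T) := Nat.card_le_card_of_injective Φ hinj
    _ = Nat.card T ^ Nat.card b := Nat.card_fun
    _ ≤ (L ^ n) ^ Nat.card b := by
        refine Nat.pow_le_pow_left ?_ _
        rw [Nat.card_eq_fintype_card, Fintype.card_coe]
        exact hTcard
    _ ≤ (L ^ n) ^ (n * n) := by
        refine Nat.pow_le_pow_right ?_ hbcard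
        exact Nat.one_le_iff_ne_zero.mpr (pow_ne_zero n hL.ne')

end Main

/-- For all positive integers `n` and `N` there exists a positive integer
`𝐍 = 𝐍(n,N)`, depending only on `n` and `N`, with the following property: for every field
`K` of characteristic zero and every subgroup `H` of `GL(n,K)` such that every element of
finite order in `H` has order at most `N`, every finite subgroup of `H` has order at most
`𝐍`.  In particular, `H` is bounded. -/
theorem stmt1 (n N : ℕ) (hn : 0 < n) (hN : 0 < N) :
    ∃ M : ℕ, 0 < M ∧
      ∀ (K : Type*) [Field K] [CharZero K] (H : Subgroup (GL (Fin n) K)),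
        (∀ h ∈ H, IsOfFinOrder h → orderOf h ≤ N) →
        ∀ B : Subgroup (GL (Fin n) K), B ≤ H → Finite B → Nat.card B ≤ M := by
  refine ⟨(N.factorial ^ n) ^ (n * n), by positivity, ?_⟩
  intro K _ _ H hH B hBH hBfin
  refine card_le_of_pow_eq_one N.factorial_pos B hBfin fun g hg => ?_
  have hfino : IsOfFinOrder g := by
    have h1 : IsOfFinOrder (⟨g, hg⟩ : B) := isOfFinOrder_of_finite _
    have h2 := MonoidHom.isOfFinOrder B.subtype h1
    simpa using h2
  have horder : orderOf g ≤ N := hH g (hBH hg) hfino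
  have hdvd : orderOf g ∣ N.factorial := Nat.dvd_factorial hfino.orderOf_pos horder
  exact orderOf_dvd_iff_pow_eq_one.mp hdvd
end

section
/- Let K be a field of characteristic zero containing all roots of unity, V a K-vector space of finite positive dimension d, and φ : V × V → K a nondegenerate symmetric K-bilinear form that is anisotropic. If u ∈ O(V,φ) is an element of finite order, then u² = 1_V. -/
open Polynomial

/-- Let `K` be a field of characteristic zero containing all roots of
unity, `V` a `K`-vector space of finite positive dimension `d`, and `φ : V × V → K` a
nondegenerate symmetric `K`-bilinear form that is anisotropic. If `u ∈ O(V,φ)` is an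
element of finite order, then `u² = 1_V`. -/
theorem stmt3 {K V : Type*} [Field K] [CharZero K] [AddCommGroup V] [Module K V]
    [FiniteDimensional K V] (hdim : 0 < Module.finrank K V)
    (hroots : ∀ n : ℕ, 0 < n → ∃ ζ : K, IsPrimitiveRoot ζ n)
    (φ : LinearMap.BilinForm K V)
    (hsymm : ∀ x y : V, φ x y = φ y x)
    (hnondeg : ∀ x : V, (∀ y : V, φ x y = 0) → x = 0)
    (haniso : ∀ v : V, v ≠ 0 → φ v v ≠ 0)
    (u : V ≃ₗ[K] V) (hu : ∀ x y : V, φ (u x) (u y) = φ x y)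
    (hfin : IsOfFinOrder u) :
    u ^ 2 = 1 := by
  set f : Module.End K V := (u : V →ₗ[K] V) with hf
  set n := orderOf u with hnn
  have hn : 0 < n := hfin.orderOf_pos
  have hun : u ^ n = 1 := pow_orderOf_eq_one u
  have hfn : f ^ n = 1 := by
    ext x
    have h1 : (f ^ n) x = (⇑u)^[n] x := by
      rw [Module.End.pow_apply]; rfl
    show (f ^ n) x = x
    rw [h1, ← LinearEquiv.pow_apply, hun]
    rfl
  have hXn0 : (X ^ n - 1 : K[X]) ≠ 0 := by
    intro h
    have := X_pow_sub_C_ne_zero hn (1 : K)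
    simp only [map_one] at this
    exact this h
  have haev : (Polynomial.aeval f) (X ^ n - 1 : K[X]) = 0 := by
    simp [map_sub, map_pow, Polynomial.aeval_X, hfn]
  have hdvd : minpoly K f ∣ X ^ n - 1 := minpoly.dvd K f haev
  have hint : IsIntegral K f := Algebra.IsIntegral.isIntegral f
  have hmp0 : minpoly K f ≠ 0 := minpoly.ne_zero hint
  have hsep : (X ^ n - 1 : K[X]).Separable :=
    Polynomial.X_pow_sub_one_separable_iff.mpr (by exact_mod_cast hn.ne')
  obtain ⟨ζ, hζ⟩ := hroots n hn
  have hsplits : (X ^ n - 1 : K[X]).Splits := by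
    have := Polynomial.X_pow_sub_one_splits hζ
    simpa using this
  have hmsep : (minpoly K f).Separable := hsep.of_dvd hdvd
  have hmsplits : (minpoly K f).Splits := by
    have := Polynomial.Splits.of_dvd hsplits hXn0 hdvd
    simpa using this
  -- every root of the minimal polynomial satisfies r ^ 2 = 1
  have hroot : ∀ r : K, (minpoly K f).IsRoot r → r ^ 2 = 1 := by
    intro r hr
    have hev : f.HasEigenvalue r := Module.End.hasEigenvalue_of_isRoot hr
    obtain ⟨v, hv⟩ := hev.exists_hasEigenvector
    have hv0 : v ≠ 0 := hv.right
    have hfv : u v = r • v := hv.apply_eq_smul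
    have : φ v v = r ^ 2 * φ v v := by
      have h1 := hu v v
      rw [hfv] at h1
      simp only [map_smul, LinearMap.smul_apply, smul_eq_mul] at h1
      linear_combination -h1
    have h2 : (r ^ 2 - 1) * φ v v = 0 := by rw [sub_mul, one_mul, ← this, sub_self]
    rcases mul_eq_zero.mp h2 with h | h
    · exact sub_eq_zero.mp h
    · exact absurd h (haniso v hv0)
  -- hence the minimal polynomial divides X ^ 2 - 1
  have hX20 : (X ^ 2 - 1 : K[X]) ≠ 0 := by
    intro h
    have := X_pow_sub_C_ne_zero (by norm_num : 0 < 2) (1 : K)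
    simp only [map_one] at this
    exact this h
  have hdvd2 : minpoly K f ∣ X ^ 2 - 1 := by
    apply hmsplits.dvd_of_roots_le_roots hmp0
    rw [Multiset.le_iff_subset (Polynomial.nodup_roots hmsep)]
    intro r hr
    have hr' : (minpoly K f).IsRoot r := Polynomial.isRoot_of_mem_roots hr
    have hr2 : r ^ 2 = 1 := hroot r hr'
    rw [Polynomial.mem_roots hX20]
    simp [Polynomial.IsRoot, hr2]
  -- conclude
  obtain ⟨q, hq⟩ := hdvd2
  have haev2 : (Polynomial.aeval f) (X ^ 2 - 1 : K[X]) = 0 := by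
    rw [hq, map_mul, minpoly.aeval, zero_mul]
  have hf2 : f ^ 2 = 1 := by
    have : f ^ 2 - 1 = 0 := by simpa using haev2
    linear_combination (norm := module) this
  ext x
  have h1 : (f ^ 2) x = x := by rw [hf2]; rfl
  have h2 : (f ^ 2) x = u (u x) := by
    rw [Module.End.pow_apply]
    rfl
  simpa [pow_two] using h2 ▸ h1
end

section
/- Let K be a field of characteristic zero containing all roots of unity, V a K-vector space of finite positive dimension d, and φ : V × V → K a nondegenerate symmetric K-bilinear form that is anisotropic. Let G be a nontrivial finite subgroup of O(V,φ). Then G is a commutative group of exponent 2 whose order divides 2^d. If, in addition, G lies in SO(V,φ), then the order of G divides 2^{d-1}. -/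
variable {K V : Type*} [Field K] [AddCommGroup V] [Module K V]

/-- The orthogonal group `O(V,φ)` of a bilinear form `φ`, viewed as the subgroup of the
group of `K`-linear automorphisms of `V` consisting of those `u` with
`φ(ux,uy) = φ(x,y)` for all `x,y ∈ V`. -/
def orthogonalSubgroup (φ : LinearMap.BilinForm K V) : Subgroup (V ≃ₗ[K] V) where
  carrier := {u | ∀ x y : V, φ (u x) (u y) = φ x y}
  one_mem' := fun _ _ => rfl
  mul_mem' := by
    intro u v hu hv x y
    have h : φ ((u * v) x) ((u * v) y) = φ (u (v x)) (u (v y)) := rfl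
    rw [h, hu, hv]
  inv_mem' := by
    intro u hu x y
    have h := hu ((u⁻¹ : V ≃ₗ[K] V) x) ((u⁻¹ : V ≃ₗ[K] V) y)
    rw [show u ((u⁻¹ : V ≃ₗ[K] V) x) = x from u.apply_symm_apply x,
      show u ((u⁻¹ : V ≃ₗ[K] V) y) = y from u.apply_symm_apply y] at h
    exact h.symm


open Polynomial Module

private lemma toLinearMap_pow' {K V : Type*} [Field K] [AddCommGroup V] [Module K V]
    (g : V ≃ₗ[K] V) (n : ℕ) : ((g ^ n : V ≃ₗ[K] V) : V →ₗ[K] V) = (g : V →ₗ[K] V) ^ n := by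
  induction n with
  | zero => rfl
  | succ n ih => rw [pow_succ, pow_succ, ← ih]; rfl

private lemma mul_self_eq_one_of_orth {K V : Type*} [Field K] [CharZero K] [AddCommGroup V]
    [Module K V] [FiniteDimensional K V]
    (hroots : ∀ n : ℕ, 0 < n → ∃ ζ : K, IsPrimitiveRoot ζ n)
    (φ : LinearMap.BilinForm K V)
    (haniso : ∀ v : V, v ≠ 0 → φ v v ≠ 0)
    (g : V ≃ₗ[K] V) (horth : ∀ x y : V, φ (g x) (g y) = φ x y)
    {n : ℕ} (hn : 0 < n) (hgn : g ^ n = 1) : g * g = 1 := by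
  classical
  set f : V →ₗ[K] V := g.toLinearMap with hf
  have hfn : f ^ n = 1 := by
    rw [hf, ← toLinearMap_pow', hgn]; rfl
  have h0 : (aeval f) (X ^ n - 1 : K[X]) = 0 := by
    simp [map_sub, map_pow, aeval_X, hfn]
  have hXmonic : (X ^ n - 1 : K[X]).Monic := by
    simpa using Polynomial.monic_X_pow_sub_C (1 : K) hn.ne'
  obtain ⟨ζ, hζ⟩ := hroots n hn
  have hsplits : (X ^ n - 1 : K[X]).Splits := by
    simpa using Polynomial.X_pow_sub_one_splits hζ
  have hint : IsIntegral K f := Algebra.IsIntegral.isIntegral f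
  have hdvd : minpoly K f ∣ X ^ n - 1 := minpoly.dvd K f h0
  have hm_monic : (minpoly K f).Monic := minpoly.monic hint
  have hsep : (minpoly K f).Separable :=
    Polynomial.Separable.of_dvd
      (Polynomial.X_pow_sub_one_separable_iff.mpr (Nat.cast_ne_zero.mpr hn.ne')) hdvd
  have hmsplits : (minpoly K f).Splits :=
    Polynomial.Splits.of_dvd hsplits hXmonic.ne_zero hdvd
  have hroot : ∀ a ∈ (minpoly K f).roots, a = 1 ∨ a = -1 := by
    intro a ha
    have hev := Module.End.hasEigenvalue_of_isRoot (Polynomial.isRoot_of_mem_roots ha)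
    obtain ⟨v, hv⟩ := hev.exists_hasEigenvector
    have hfv : f v = a • v := hv.apply_eq_smul
    have hphi := horth v v
    have hgv : g v = a • v := hfv
    rw [hgv] at hphi
    simp only [map_smul, LinearMap.smul_apply, smul_eq_mul] at hphi
    have haa : a * a = 1 := by
      have h' : (a * a) * φ v v = 1 * φ v v := by rw [mul_assoc, one_mul]; exact hphi
      exact mul_right_cancel₀ (haniso v hv.2) h'
    exact mul_self_eq_one_iff.mp haa
  have hle : (minpoly K f).roots ≤ ({1, -1} : Multiset K) := by
    have hnodup := Polynomial.nodup_roots hsep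
    rw [Multiset.le_iff_count]
    intro a
    by_cases ha : a ∈ (minpoly K f).roots
    · have h1 : (minpoly K f).roots.count a ≤ 1 := Multiset.nodup_iff_count_le_one.mp hnodup a
      have h2 : 1 ≤ ({1, -1} : Multiset K).count a := by
        rcases hroot a ha with rfl | rfl
        · simp
        · have : (-1 : K) ≠ 1 := by norm_num
          simp [Multiset.count_cons, Multiset.count_singleton, this]
      omega
    · simp [Multiset.count_eq_zero_of_notMem ha]
  have heq := Polynomial.Splits.eq_prod_roots_of_monic hmsplits hm_monic
  have hdvd2 : minpoly K f ∣ (X ^ 2 - 1 : K[X]) := by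
    have hprod : ((({1, -1} : Multiset K)).map fun a => X - C a).prod = (X ^ 2 - 1 : K[X]) := by
      simp only [Multiset.insert_eq_cons, Multiset.map_cons, Multiset.map_singleton,
        Multiset.prod_cons, Multiset.prod_singleton, map_one, map_neg]
      ring
    rw [heq, ← hprod]
    exact Multiset.prod_dvd_prod_of_le (Multiset.map_le_map hle)
  obtain ⟨c, hc⟩ := hdvd2
  have haev : (aeval f) (X ^ 2 - 1 : K[X]) = 0 := by
    rw [hc, map_mul, minpoly.aeval, zero_mul]
  have hf2 : f * f = 1 := by
    have h1 : f ^ 2 - 1 = 0 := by simpa using haev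
    have h2 : f ^ 2 = 1 := by rwa [sub_eq_zero] at h1
    rwa [pow_two] at h2
  refine LinearEquiv.ext fun x => ?_
  have := congrArg (fun (h : V →ₗ[K] V) => h x) hf2
  simpa [hf] using this


private def subRestrict' {K V : Type*} [Field K] [AddCommGroup V] [Module K V]
    (G : Subgroup (V ≃ₗ[K] V)) (p : Submodule K V)
    (hp : ∀ h ∈ G, ∀ v ∈ p, h v ∈ p) : ↥G →* (↥p ≃ₗ[K] ↥p) where
  toFun h :=
    { toFun := fun v => ⟨h.1 v, hp h.1 h.2 v v.2⟩
      map_add' := fun a b => Subtype.ext (by simp)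
      map_smul' := fun c a => Subtype.ext (by simp)
      invFun := fun v => ⟨(h.1)⁻¹ v, hp _ (inv_mem h.2) v v.2⟩
      left_inv := fun v => Subtype.ext (h.1.symm_apply_apply v)
      right_inv := fun v => Subtype.ext (h.1.apply_symm_apply v) }
  map_one' := by ext v; rfl
  map_mul' a b := by ext v; rfl


universe u

private lemma det_prodMap' {K : Type*} [Field K] {M N : Type*} [AddCommGroup M] [Module K M]
    [AddCommGroup N] [Module K N] [FiniteDimensional K M] [FiniteDimensional K N]
    (f : M →ₗ[K] M) (g : N →ₗ[K] N) :
    LinearMap.det (f.prodMap g) = LinearMap.det f * LinearMap.det g := by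
  classical
  let b1 := Module.finBasis K M
  let b2 := Module.finBasis K N
  rw [← LinearMap.det_toMatrix (b1.prod b2), LinearMap.toMatrix_prodMap b1 b2 f g,
    Matrix.det_fromBlocks_zero₂₁, LinearMap.det_toMatrix, LinearMap.det_toMatrix]

set_option maxHeartbeats 2000000 in
private lemma card_dvd_aux (K : Type*) [Field K] [CharZero K] :
    ∀ (n : ℕ) (V : Type u) [AddCommGroup V] [Module K V] [FiniteDimensional K V],
      Module.finrank K V = n →
      ∀ G : Subgroup (V ≃ₗ[K] V), Finite ↥G →
        (∀ a ∈ G, ∀ b ∈ G, a * b = b * a) →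
        (∀ g ∈ G, g * g = 1) →
        Nat.card ↥G ∣ 2 ^ n ∧
          ((∀ g ∈ G, LinearEquiv.det g = 1) → Nat.card ↥G ∣ 2 ^ (n - 1)) := by
  intro n
  induction n using Nat.strong_induction_on with
  | _ n IH =>
  intro V _ _ _ hrank G hfin hcomm hsq
  classical
  haveI := hfin
  by_cases htriv : ∀ g ∈ G, g = 1 ∨ g = LinearEquiv.neg K
  · by_cases hbot : G = ⊥
    · subst hbot
      simp [Subgroup.card_bot]
    · obtain ⟨g, hgG, hg1⟩ : ∃ g ∈ G, g ≠ 1 := by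
        by_contra h
        push_neg at h
        exact hbot (by
          ext x
          simp only [Subgroup.mem_bot]
          exact ⟨fun hx => h x hx, fun hx => hx ▸ G.one_mem⟩)
      have hgneg : g = LinearEquiv.neg K := (htriv g hgG).resolve_left hg1
      have hVnt : Nontrivial V := by
        by_contra h
        rw [not_nontrivial_iff_subsingleton] at h
        exact hg1 (LinearEquiv.ext fun v => Subsingleton.elim _ _)
      have hn1 : 1 ≤ n := by
        rw [← hrank]
        exact Module.finrank_pos
      have hGset : (G : Set (V ≃ₗ[K] V)) = {1, LinearEquiv.neg K} := by
        ext x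
        constructor
        · intro hx
          rcases htriv x hx with h | h <;> simp [h]
        · rintro (rfl | rfl)
          · exact G.one_mem
          · exact hgneg ▸ hgG
      have hne : (1 : V ≃ₗ[K] V) ≠ LinearEquiv.neg K := fun h => hg1 (hgneg.trans h.symm)
      have hcard : Nat.card ↥G = 2 := by
        have h0 : Nat.card ↥G = Nat.card ↥(G : Set (V ≃ₗ[K] V)) := rfl
        rw [h0, Nat.card_coe_set_eq, hGset, Set.ncard_pair hne]
      constructor
      · rw [hcard]
        exact (pow_one 2) ▸ pow_dvd_pow 2 hn1
      · intro hdet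
        have hdetneg : LinearMap.det ((LinearEquiv.neg K : V ≃ₗ[K] V) : V →ₗ[K] V)
            = (-1 : K) ^ n := by
          have hid : ((LinearEquiv.neg K : V ≃ₗ[K] V) : V →ₗ[K] V)
              = (-1 : K) • LinearMap.id := by
            ext v; simp
          rw [hid, LinearMap.det_smul, hrank, LinearMap.det_id, mul_one]
        have hone : ((-1 : K)) ^ n = 1 := by
          have h1 := hdet g hgG
          have h2 : (LinearEquiv.det g : K) = 1 := by rw [h1]; rfl
          rwa [LinearEquiv.coe_det, hgneg, hdetneg] at h2
        have heven : Even n := by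
          rwa [neg_one_pow_eq_one_iff_even (by norm_num : (-1 : K) ≠ 1)] at hone
        have hn2 : 2 ≤ n := by
          rcases heven with ⟨k, hk⟩
          omega
        rw [hcard]
        exact (pow_one 2) ▸ pow_dvd_pow 2 (by omega)
  · push_neg at htriv
    obtain ⟨g, hgG, hg1, hgneg⟩ := htriv
    set p : Submodule K V := LinearMap.ker ((g : V →ₗ[K] V) - LinearMap.id) with hp
    set q : Submodule K V := LinearMap.ker ((g : V →ₗ[K] V) + LinearMap.id) with hq
    have hmp : ∀ v : V, v ∈ p ↔ g v = v := by
      intro v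
      simp [hp, LinearMap.mem_ker, sub_eq_zero]
    have hmq : ∀ v : V, v ∈ q ↔ g v = -v := by
      intro v
      simp [hq, LinearMap.mem_ker, add_eq_zero_iff_eq_neg]
    have hg2 := hsq g hgG
    have hginv : ∀ v : V, g (g v) = v := by
      intro v
      have := LinearEquiv.ext_iff.mp hg2 v
      simpa using this
    have hsup : p ⊔ q = ⊤ := by
      rw [eq_top_iff]
      intro v _
      have hv : v = (2⁻¹ : K) • (v + g v) + (2⁻¹ : K) • (v - g v) := by
        rw [← smul_add]
        have : v + g v + (v - g v) = (2 : K) • v := by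
          rw [two_smul]; abel
        rw [this, smul_smul, inv_mul_cancel₀ (two_ne_zero), one_smul]
      rw [hv]
      refine Submodule.add_mem_sup (Submodule.smul_mem _ _ ((hmp _).mpr ?_))
        (Submodule.smul_mem _ _ ((hmq _).mpr ?_))
      · rw [map_add, hginv]; abel
      · rw [map_sub, hginv]; abel
    have hinf : p ⊓ q = ⊥ := by
      rw [eq_bot_iff]
      rintro v ⟨hvp, hvq⟩
      have h1 := (hmp v).mp hvp
      have h2 := (hmq v).mp hvq
      rw [h1] at h2
      have hv0 : v + v = 0 := eq_neg_iff_add_eq_zero.mp h2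
      have : (2 : K) • v = 0 := by rw [two_smul]; exact hv0
      rw [Submodule.mem_bot]
      exact (smul_eq_zero.mp this).resolve_left two_ne_zero
    have hcompl : IsCompl p q := ⟨disjoint_iff.mpr hinf, codisjoint_iff.mpr hsup⟩
    have hpinv : ∀ h ∈ G, ∀ v ∈ p, h v ∈ p := by
      intro h hh v hv
      rw [hmp] at hv ⊢
      have hc := hcomm g hgG h hh
      calc g (h v) = (g * h) v := rfl
        _ = (h * g) v := by rw [hc]
        _ = h (g v) := rfl
        _ = h v := by rw [hv]
    have hqinv : ∀ h ∈ G, ∀ v ∈ q, h v ∈ q := by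
      intro h hh v hv
      rw [hmq] at hv ⊢
      have hc := hcomm g hgG h hh
      calc g (h v) = (g * h) v := rfl
        _ = (h * g) v := by rw [hc]
        _ = h (g v) := rfl
        _ = h (-v) := by rw [hv]
        _ = -(h v) := map_neg _ _
    have hptop : p ≠ ⊤ := by
      intro h
      exact hg1 (LinearEquiv.ext fun v => (hmp v).mp (h ▸ Submodule.mem_top))
    have hqtop : q ≠ ⊤ := by
      intro h
      refine hgneg (LinearEquiv.ext fun v => ?_)
      rw [(hmq v).mp (h ▸ Submodule.mem_top)]
      simp
    have hpbot : p ≠ ⊥ := by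
      intro h
      rw [h, bot_sup_eq] at hsup
      exact hqtop hsup
    have hqbot : q ≠ ⊥ := by
      intro h
      rw [h, sup_bot_eq] at hsup
      exact hptop hsup
    have hnpq : finrank K ↥p + finrank K ↥q = n := by
      have := Submodule.finrank_sup_add_finrank_inf_eq p q
      rw [hsup, hinf, finrank_top, finrank_bot, add_zero, hrank] at this
      omega
    have hnp_lt : finrank K ↥p < n := by
      rw [← hrank]
      exact Submodule.finrank_lt hptop
    have hnq_lt : finrank K ↥q < n := by
      rw [← hrank]
      exact Submodule.finrank_lt hqtop
    have hnp_pos : 0 < finrank K ↥p := by omega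
    have hnq_pos : 0 < finrank K ↥q := by omega
    set Fp := subRestrict' G p hpinv with hFp
    set Fq := subRestrict' G q hqinv with hFq
    set H1 := Fp.range with hH1
    set H2 := Fq.range with hH2
    haveI : Finite ↥H1 := Finite.of_surjective _ Fp.rangeRestrict_surjective
    haveI : Finite ↥H2 := Finite.of_surjective _ Fq.rangeRestrict_surjective
    have hcomm1 : ∀ a ∈ H1, ∀ b ∈ H1, a * b = b * a := by
      rintro a ⟨x, rfl⟩ b ⟨y, rfl⟩
      rw [← map_mul, ← map_mul]
      congr 1
      exact Subtype.ext (hcomm x.1 x.2 y.1 y.2)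
    have hsq1 : ∀ a ∈ H1, a * a = 1 := by
      rintro a ⟨x, rfl⟩
      rw [← map_mul, show x * x = 1 from Subtype.ext (hsq x.1 x.2), map_one]
    have hcomm2 : ∀ a ∈ H2, ∀ b ∈ H2, a * b = b * a := by
      rintro a ⟨x, rfl⟩ b ⟨y, rfl⟩
      rw [← map_mul, ← map_mul]
      congr 1
      exact Subtype.ext (hcomm x.1 x.2 y.1 y.2)
    have hsq2 : ∀ a ∈ H2, a * a = 1 := by
      rintro a ⟨x, rfl⟩
      rw [← map_mul, show x * x = 1 from Subtype.ext (hsq x.1 x.2), map_one]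
    have IH1 := IH (finrank K ↥p) hnp_lt ↥p rfl H1 inferInstance hcomm1 hsq1
    have IH2 := IH (finrank K ↥q) hnq_lt ↥q rfl H2 inferInstance hcomm2 hsq2
    set Φ := Fp.prod Fq with hΦ
    have hΦinj : Function.Injective Φ := by
      rw [injective_iff_map_eq_one]
      intro x hx
      have h1 : Fp x = 1 := congrArg Prod.fst hx
      have h2 : Fq x = 1 := congrArg Prod.snd hx
      have hxp : ∀ v ∈ p, x.1 v = v := fun v hv =>
        congrArg Subtype.val (LinearEquiv.ext_iff.mp h1 ⟨v, hv⟩)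
      have hxq : ∀ v ∈ q, x.1 v = v := fun v hv =>
        congrArg Subtype.val (LinearEquiv.ext_iff.mp h2 ⟨v, hv⟩)
      refine Subtype.ext (LinearEquiv.ext fun v => ?_)
      obtain ⟨a, ha, b, hb, rfl⟩ := Submodule.mem_sup.mp (hsup ▸ Submodule.mem_top (x := v))
      show x.1 (a + b) = a + b
      rw [map_add, hxp a ha, hxq b hb]
    set P := H1.prod H2 with hP
    have hmemP : ∀ x : ↥G, Φ x ∈ P := fun x => ⟨⟨x, rfl⟩, ⟨x, rfl⟩⟩
    set Φ' : ↥G →* ↥P := Φ.codRestrict P hmemP with hΦ'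
    have hΦ'inj : Function.Injective Φ' := fun a b h =>
      hΦinj (congrArg Subtype.val h)
    haveI : Finite ↥P := by
      have : Finite (↥H1 × ↥H2) := inferInstance
      exact Finite.of_equiv _ (Subgroup.prodEquiv H1 H2).toEquiv.symm
    have hcardP : Nat.card ↥P = Nat.card ↥H1 * Nat.card ↥H2 := by
      rw [Nat.card_congr (Subgroup.prodEquiv H1 H2).toEquiv, Nat.card_prod]
    have hcardGP : Nat.card ↥G ∣ Nat.card ↥P := Subgroup.card_dvd_of_injective Φ' hΦ'inj
    have hPdvd : Nat.card ↥P ∣ 2 ^ n := by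
      rw [hcardP, ← hnpq, pow_add]
      exact mul_dvd_mul IH1.1 IH2.1
    refine ⟨hcardGP.trans hPdvd, ?_⟩
    intro hdet
    -- determinant splitting
    set e := Submodule.prodEquivOfIsCompl p q hcompl with he
    have hdet_split : ∀ x : ↥G,
        (LinearEquiv.det (Fp x) : K) * (LinearEquiv.det (Fq x) : K) = 1 := by
      intro x
      have key : ((x.1 : V →ₗ[K] V).comp (e : ↥p × ↥q →ₗ[K] V))
          = (e : ↥p × ↥q →ₗ[K] V).comp
            (((Fp x : ↥p →ₗ[K] ↥p)).prodMap ((Fq x : ↥q →ₗ[K] ↥q))) := by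
        have heapp : ∀ w : ↥p × ↥q, (e w : V) = ↑w.1 + ↑w.2 := by
          simp only [he]
          exact fun w => Submodule.coe_prodEquivOfIsCompl' p q hcompl w
        refine LinearMap.ext fun v => ?_
        simp only [LinearMap.comp_apply, LinearMap.prodMap_apply, LinearEquiv.coe_coe]
        rw [heapp, heapp, map_add]
        rfl
      have hconj : ((e : ↥p × ↥q →ₗ[K] V).comp
            ((((Fp x : ↥p →ₗ[K] ↥p)).prodMap ((Fq x : ↥q →ₗ[K] ↥q))).comp
              (e.symm : V →ₗ[K] ↥p × ↥q)))
          = (x.1 : V →ₗ[K] V) := by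
        refine LinearMap.ext fun v => ?_
        have := congrArg (fun (h : ↥p × ↥q →ₗ[K] V) => h (e.symm v)) key
        simp only [LinearMap.comp_apply, LinearEquiv.coe_coe] at this ⊢
        rw [← this, LinearEquiv.apply_symm_apply]
      have hdetx : LinearMap.det (x.1 : V →ₗ[K] V)
          = LinearMap.det ((Fp x : ↥p →ₗ[K] ↥p)) * LinearMap.det ((Fq x : ↥q →ₗ[K] ↥q)) := by
        rw [← hconj, LinearMap.det_conj, det_prodMap']
      have h1 : (LinearEquiv.det x.1 : K) = 1 := by rw [hdet x.1 x.2]; rfl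
      rw [LinearEquiv.coe_det] at h1
      rw [LinearEquiv.coe_det, LinearEquiv.coe_det]
      rw [← hdetx]
      exact h1
    set δ : ((↥p ≃ₗ[K] ↥p) × (↥q ≃ₗ[K] ↥q)) →* Kˣ :=
      (LinearEquiv.det.comp (MonoidHom.fst _ _)) * (LinearEquiv.det.comp (MonoidHom.snd _ _))
      with hδ
    set δ' : ↥P →* Kˣ := δ.comp P.subtype with hδ'
    have hδapp : ∀ x : ↥P, δ' x = LinearEquiv.det x.1.1 * LinearEquiv.det x.1.2 :=
      fun x => rfl
    have hPsq : ∀ x : ↥P, x * x = 1 := by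
      rintro ⟨⟨a, b⟩, hab⟩
      obtain ⟨ha, hb⟩ := Subgroup.mem_prod.mp hab
      refine Subtype.ext (Prod.ext ?_ ?_)
      · exact hsq1 a ha
      · exact hsq2 b hb
    have hδ'pm : ∀ x : ↥P, δ' x = 1 ∨ δ' x = -1 := by
      intro x
      have h1 : δ' x * δ' x = 1 := by rw [← map_mul, hPsq, map_one]
      have h2 : (δ' x : K) * (δ' x : K) = 1 := by
        rw [← Units.val_mul, h1, Units.val_one]
      rcases mul_self_eq_one_iff.mp h2 with h | h
      · exact Or.inl (Units.ext h)
      · exact Or.inr (Units.ext (by rw [h]; rfl))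
    by_cases hδtriv : ∀ x : ↥P, δ' x = 1
    · have hdet1 : ∀ a ∈ H1, LinearEquiv.det a = 1 := by
        intro a ha
        have h := (hδapp ⟨(a, 1), ⟨ha, H2.one_mem⟩⟩).symm.trans
          (hδtriv ⟨(a, 1), ⟨ha, H2.one_mem⟩⟩)
        rwa [map_one, mul_one] at h
      have hdet2 : ∀ a ∈ H2, LinearEquiv.det a = 1 := by
        intro a ha
        have h := (hδapp ⟨(1, a), ⟨H1.one_mem, ha⟩⟩).symm.trans
          (hδtriv ⟨(1, a), ⟨H1.one_mem, ha⟩⟩)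
        rwa [map_one, one_mul] at h
      have hd1 := IH1.2 hdet1
      have hd2 := IH2.2 hdet2
      refine hcardGP.trans ((hcardP ▸ mul_dvd_mul hd1 hd2).trans ?_)
      rw [← pow_add]
      exact pow_dvd_pow 2 (by omega)
    · push_neg at hδtriv
      obtain ⟨x₀, hx₀⟩ := hδtriv
      have hx₀neg : δ' x₀ = -1 := (hδ'pm x₀).resolve_left hx₀
      have hrangeset : (δ'.range : Set Kˣ) = {1, -1} := by
        ext u
        constructor
        · rintro ⟨x, rfl⟩
          rcases hδ'pm x with h | h
          · rw [h]; exact Set.mem_insert _ _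
          · rw [h]; exact Set.mem_insert_iff.mpr (Or.inr rfl)
        · rintro (rfl | rfl)
          · exact ⟨1, map_one δ'⟩
          · exact ⟨x₀, hx₀neg⟩
      have hrange2 : Nat.card ↥δ'.range = 2 := by
        have h0 : Nat.card ↥δ'.range = Nat.card ↥(δ'.range : Set Kˣ) := rfl
        rw [h0, Nat.card_coe_set_eq, hrangeset, Set.ncard_pair]
        intro h
        have : ((1 : Kˣ) : K) = ((-1 : Kˣ) : K) := congrArg Units.val h
        norm_num at this
      have hkermul : Nat.card ↥(δ'.ker) * 2 = Nat.card ↥P := by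
        rw [← hrange2, ← Subgroup.index_ker]
        exact Subgroup.card_mul_index δ'.ker
      have hn2 : 2 ≤ n := by omega
      have hker_dvd : Nat.card ↥(δ'.ker) ∣ 2 ^ (n - 1) := by
        have h2n : (2 : ℕ) ^ n = 2 ^ (n - 1) * 2 := by
          rw [← pow_succ]
          congr 1
          omega
        have := hPdvd
        rw [← hkermul, h2n] at this
        exact (Nat.mul_dvd_mul_iff_right (by norm_num : 0 < 2)).mp this
      have hmemker : ∀ x : ↥G, Φ' x ∈ δ'.ker := by
        intro x
        have h0 : δ' (Φ' x) = LinearEquiv.det (Fp x) * LinearEquiv.det (Fq x) :=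
          hδapp (Φ' x)
        rw [MonoidHom.mem_ker, h0]
        refine Units.ext ?_
        rw [Units.val_mul, Units.val_one]
        exact hdet_split x
      set Φ'' : ↥G →* ↥(δ'.ker) := Φ'.codRestrict δ'.ker hmemker with hΦ''
      have hΦ''inj : Function.Injective Φ'' := fun a b h =>
        hΦ'inj (congrArg Subtype.val h)
      exact (Subgroup.card_dvd_of_injective Φ'' hΦ''inj).trans hker_dvd

/-- Let `K` be a field of characteristic zero containing all roots of
unity, `V` a `K`-vector space of finite positive dimension `d`, and `φ` a nondegenerate
symmetric anisotropic `K`-bilinear form on `V`. Let `G` be a nontrivial finite subgroup of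
`O(V,φ)`. Then `G` is a commutative group of exponent `2` whose order divides `2 ^ d`.
If, in addition, `G` lies in `SO(V,φ)`, then the order of `G` divides `2 ^ (d - 1)`. -/
theorem stmt5 {K V : Type*} [Field K] [CharZero K] [AddCommGroup V] [Module K V]
    [FiniteDimensional K V] (hdim : 0 < Module.finrank K V)
    (hroots : ∀ n : ℕ, 0 < n → ∃ ζ : K, IsPrimitiveRoot ζ n)
    (φ : LinearMap.BilinForm K V)
    (hsymm : ∀ x y : V, φ x y = φ y x)
    (hnondeg : ∀ x : V, (∀ y : V, φ x y = 0) → x = 0)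
    (haniso : ∀ v : V, v ≠ 0 → φ v v ≠ 0)
    (G : Subgroup (V ≃ₗ[K] V)) (hG : G ≤ orthogonalSubgroup φ)
    (hGfin : Finite G) (hGnontriv : G ≠ ⊥) :
    (∀ a ∈ G, ∀ b ∈ G, a * b = b * a) ∧ Monoid.exponent G = 2 ∧
      Nat.card G ∣ 2 ^ (Module.finrank K V) ∧
      ((∀ u ∈ G, LinearEquiv.det u = 1) → Nat.card G ∣ 2 ^ (Module.finrank K V - 1)) := by
  haveI := hGfin
  have hsq : ∀ g ∈ G, g * g = 1 := by
    intro g hg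
    have hn : 0 < orderOf (⟨g, hg⟩ : ↥G) := orderOf_pos _
    have hgn : g ^ orderOf (⟨g, hg⟩ : ↥G) = 1 := by
      have h1 := pow_orderOf_eq_one (⟨g, hg⟩ : ↥G)
      have h2 := congrArg Subtype.val h1
      simpa using h2
    exact mul_self_eq_one_of_orth hroots φ haniso g (hG hg) hn hgn
  have hcomm : ∀ a ∈ G, ∀ b ∈ G, a * b = b * a := by
    intro a ha b hb
    have hab := hsq _ (mul_mem ha hb)
    have ha2 := hsq a ha
    have hb2 := hsq b hb
    have hinv : ∀ x : V ≃ₗ[K] V, x * x = 1 → x⁻¹ = x := fun x hx =>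
      inv_eq_of_mul_eq_one_right hx
    calc a * b = (a * b)⁻¹ := (hinv _ hab).symm
      _ = b⁻¹ * a⁻¹ := mul_inv_rev a b
      _ = b * a := by rw [hinv a ha2, hinv b hb2]
  have hexp : Monoid.exponent ↥G = 2 := by
    have hdvd : Monoid.exponent ↥G ∣ 2 := by
      apply Monoid.exponent_dvd_of_forall_pow_eq_one
      intro x
      refine Subtype.ext ?_
      rw [SubmonoidClass.coe_pow, pow_two]
      exact hsq x.1 x.2
    haveI : Nontrivial ↥G := G.bot_or_nontrivial.resolve_left hGnontriv
    have hne1 : Monoid.exponent ↥G ≠ 1 := fun h =>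
      (not_subsingleton ↥G) (Monoid.exp_eq_one_iff.mp h)
    rcases (Nat.prime_two.eq_one_or_self_of_dvd _ hdvd) with h | h
    · exact absurd h hne1
    · exact h
  have hmain := card_dvd_aux K (Module.finrank K V) V rfl G hGfin hcomm hsq
  exact ⟨hcomm, hexp, hmain.1, hmain.2⟩
end

section
/- Let K be a field of characteristic zero containing all roots of unity, V a K-vector space of finite positive dimension d, and φ : V × V → K a nondegenerate symmetric K-bilinear form that is anisotropic. Let u ∈ GO(V,φ) be a similitude such that there exist a positive integer n and c ∈ K* with uⁿ = c·1_V (i.e., the image of u in PO(V,φ) = GO(V,φ)/(K*·1_V) has finite order). Then there exists c' ∈ K* with u⁴ = c'·1_V, i.e., the image of u in PO(V,φ) has order dividing 4. -/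
open Polynomial Module

/-- Let `K` be a field of characteristic zero containing all roots of
unity, `V` a `K`-vector space of finite positive dimension, and `φ` a nondegenerate
symmetric anisotropic `K`-bilinear form on `V`. Let `u ∈ GO(V,φ)` be a similitude such
that there exist a positive integer `n` and `c ∈ K*` with `uⁿ = c·1_V` (i.e., the image of
`u` in `PO(V,φ)` has finite order). Then there exists `c' ∈ K*` with `u⁴ = c'·1_V`, i.e.,
the image of `u` in `PO(V,φ)` has order dividing `4`. -/
theorem stmt6 {K V : Type*} [Field K] [CharZero K] [AddCommGroup V] [Module K V]
    [FiniteDimensional K V] (hdim : 0 < Module.finrank K V)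
    (hroots : ∀ n : ℕ, 0 < n → ∃ ζ : K, IsPrimitiveRoot ζ n)
    (φ : LinearMap.BilinForm K V)
    (hsymm : ∀ x y : V, φ x y = φ y x)
    (hnondeg : ∀ x : V, (∀ y : V, φ x y = 0) → x = 0)
    (haniso : ∀ v : V, v ≠ 0 → φ v v ≠ 0)
    (u : V ≃ₗ[K] V)
    (hGO : ∃ μ : K, μ ≠ 0 ∧ ∀ x y : V, φ (u x) (u y) = μ * φ x y)
    (hfin : ∃ n : ℕ, 0 < n ∧ ∃ c : K, c ≠ 0 ∧ ∀ x : V, (u ^ n) x = c • x) :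
    ∃ c' : K, c' ≠ 0 ∧ ∀ x : V, (u ^ 4) x = c' • x := by
  obtain ⟨μ, hμ, hφu⟩ := hGO
  obtain ⟨n, hn, c, hc, hun⟩ := hfin
  -- powers of u scale φ by powers of μ
  have hpow : ∀ (k : ℕ) (x y : V), φ ((u ^ k) x) ((u ^ k) y) = μ ^ k * φ x y := by
    intro k
    induction k with
    | zero => simp
    | succ k ih =>
      intro x y
      have h1 : (u ^ (k + 1)) x = u ((u ^ k) x) := by
        rw [pow_succ']; rfl
      have h2 : (u ^ (k + 1)) y = u ((u ^ k) y) := by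
        rw [pow_succ']; rfl
      rw [h1, h2, hφu, ih, pow_succ]; ring
  -- a nonzero vector exists
  have : Nontrivial V := Module.nontrivial_of_finrank_pos hdim
  obtain ⟨v, hv⟩ := exists_ne (0 : V)
  -- μ ^ n = c ^ 2
  have hμn : μ ^ n = c ^ 2 := by
    have h1 : φ ((u ^ n) v) ((u ^ n) v) = μ ^ n * φ v v := hpow n v v
    rw [hun v] at h1
    simp only [map_smul, LinearMap.smul_apply, smul_eq_mul] at h1
    have := haniso v hv
    have h2 : (c * c - μ ^ n) * φ v v = 0 := by linear_combination h1
    rcases mul_eq_zero.1 h2 with h | h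
    · linear_combination -h
    · exact absurd h this
  -- the normalized square f = μ⁻¹ • u² is an isometry
  set g : Module.End K V := ((u * u : V ≃ₗ[K] V) : V →ₗ[K] V) with hg
  set f : Module.End K V := μ⁻¹ • g with hf
  have hfx : ∀ x : V, f x = μ⁻¹ • u (u x) := by
    intro x; simp [hf, hg]
  have hiso : ∀ x y : V, φ (f x) (f y) = φ x y := by
    intro x y
    rw [hfx, hfx]
    simp only [map_smul, LinearMap.smul_apply, smul_eq_mul]
    rw [hφu, hφu]
    field_simp
  -- f ^ k x = μ⁻ᵏ • (u ^ (2k)) x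
  have hfpow : ∀ (k : ℕ) (x : V), (f ^ k) x = (μ⁻¹) ^ k • (u ^ (2 * k)) x := by
    intro k
    induction k with
    | zero => intro x; simp
    | succ k ih =>
      intro x
      have h1 : (f ^ (k + 1)) x = (f ^ k) (f x) := by
        rw [pow_succ]; rfl
      rw [h1, hfx, map_smul, ih]
      have h2 : (u ^ (2 * (k + 1))) x = (u ^ (2 * k)) (u (u x)) := by
        have h3 : 2 * (k + 1) = 2 * k + 1 + 1 := by ring
        rw [h3, pow_succ, pow_succ]
        rfl
      rw [h2, smul_smul, ← pow_succ']
  -- f ^ n = 1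
  have hfn : f ^ n = 1 := by
    ext x
    have := hfpow n x
    have h2n : (u ^ (2 * n)) x = c • c • x := by
      rw [two_mul, pow_add]
      show (u ^ n) ((u ^ n) x) = c • c • x
      rw [hun ((u ^ n) x), hun x]
    rw [this, h2n]
    have : (μ⁻¹) ^ n • c • c • x = ((μ ^ n)⁻¹ * c ^ 2) • x := by
      rw [← inv_pow, smul_smul, smul_smul]
      congr 1
      ring
    rw [this, hμn, inv_mul_cancel₀ (pow_ne_zero 2 hc), one_smul]
    rfl
  -- the minimal polynomial of f divides Xⁿ - 1
  have hint : IsIntegral K f := Algebra.IsIntegral.isIntegral f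
  have haevn : (Polynomial.aeval f) (X ^ n - 1 : K[X]) = 0 := by
    simp [map_sub, map_pow, hfn]
  have hdvdn : minpoly K f ∣ (X ^ n - 1 : K[X]) := minpoly.dvd K f haevn
  have hXn_ne : (X ^ n - 1 : K[X]) ≠ 0 := by
    have h := (Polynomial.monic_X_pow_sub_C (1 : K) hn.ne').ne_zero
    simpa using h
  -- Xⁿ - 1 is separable and splits over K
  have hsep : (X ^ n - 1 : K[X]).Separable :=
    Polynomial.X_pow_sub_one_separable_iff.2 (Nat.cast_ne_zero.2 hn.ne')
  obtain ⟨ζ, hζ⟩ := hroots n hn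
  have hsplits : (X ^ n - 1 : K[X]).Splits := by
    rw [Polynomial.splits_iff_card_roots]
    have hroots_eq : (X ^ n - 1 : K[X]).roots = Polynomial.nthRoots n (1 : K) := by
      simp [Polynomial.nthRoots]
    rw [hroots_eq]
    rw [hζ.card_nthRoots]
    have : (X ^ n - 1 : K[X]).natDegree = n := by
      have : (X ^ n - 1 : K[X]) = X ^ n - C 1 := by simp
      rw [this, Polynomial.natDegree_X_pow_sub_C]
    rw [this, if_pos ⟨1, one_pow n⟩]
  -- hence the minimal polynomial of f is separable and splits
  have hpsep : (minpoly K f).Separable := hsep.of_dvd hdvdn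
  have hpsplits : (minpoly K f).Splits :=
    hsplits.of_dvd hXn_ne hdvdn
  have hpne : minpoly K f ≠ 0 := minpoly.ne_zero hint
  have hpmonic : (minpoly K f).Monic := minpoly.monic hint
  -- every root of the minimal polynomial is ±1, by anisotropy
  have hroots_pm : ∀ r ∈ (minpoly K f).roots, r = 1 ∨ r = -1 := by
    intro r hr
    have hisroot : (minpoly K f).IsRoot r := (Polynomial.mem_roots hpne).1 hr
    have heig : f.HasEigenvalue r := Module.End.hasEigenvalue_of_isRoot hisroot
    obtain ⟨w, hw⟩ := heig.exists_hasEigenvector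
    have hw0 : w ≠ 0 := hw.2
    have hfw : f w = r • w := hw.apply_eq_smul
    have h1 : φ (f w) (f w) = φ w w := hiso w w
    rw [hfw] at h1
    simp only [map_smul, LinearMap.smul_apply, smul_eq_mul] at h1
    have h2 : (r * r - 1) * φ w w = 0 := by linear_combination h1
    rcases mul_eq_zero.1 h2 with h | h
    · have h3 : (r - 1) * (r + 1) = 0 := by linear_combination h
      rcases mul_eq_zero.1 h3 with h4 | h4
      · left; linear_combination h4
      · right; linear_combination h4
    · exact absurd h (haniso w hw0)
  -- therefore minpoly f divides (X - 1)(X + 1) = X² - 1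
  have hle : (minpoly K f).roots ≤ ({1, -1} : Multiset K) := by
    rw [Multiset.le_iff_subset (Polynomial.nodup_roots hpsep)]
    intro r hr
    rcases hroots_pm r hr with h | h <;> simp [h]
  have hpeq : minpoly K f = ((minpoly K f).roots.map fun a => X - C a).prod :=
    hpsplits.eq_prod_roots_of_monic hpmonic
  have hdvd2 : minpoly K f ∣ (X ^ 2 - 1 : K[X]) := by
    have h1 : minpoly K f ∣ (({1, -1} : Multiset K).map fun a => X - C a).prod := by
      rw [hpeq]
      exact Multiset.prod_dvd_prod_of_le (Multiset.map_le_map hle)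
    have h2 : (({1, -1} : Multiset K).map fun a => X - C a).prod = X ^ 2 - 1 := by
      simp [Multiset.map_cons, Multiset.prod_cons]
      ring
    rwa [h2] at h1
  -- hence f² = 1
  have hf2 : f ^ 2 = 1 := by
    obtain ⟨q, hq⟩ := hdvd2
    have : (Polynomial.aeval f) (X ^ 2 - 1 : K[X]) = 0 := by
      rw [hq, map_mul, minpoly.aeval, zero_mul]
    have h : f ^ 2 - 1 = 0 := by simpa using this
    linear_combination (norm := abel) h
  -- conclude u⁴ = μ² • 1
  refine ⟨μ ^ 2, pow_ne_zero 2 hμ, fun x => ?_⟩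
  have h1 : x = (μ⁻¹) ^ 2 • (u ^ 4) x := by
    have h := hfpow 2 x
    rw [hf2] at h
    norm_num at h
    simpa using h
  conv_rhs => rw [h1]
  rw [smul_smul, ← mul_pow, mul_inv_cancel₀ hμ, one_pow, one_smul]
end
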